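/- arXiv:1411.4691 — 2 statements merged into one kernel-verified Lean document; each statement's English description precedes it below -/
import Mathlib

section
/- KKT cardinality inequality for Type-A GRESH minimizers (key optimization inequality in the proof of Theorem 2): Let λ₁, λ₂ > 0 and suppose X̆ ≠ 0. Let Ω̂ = [b̂, Φ̂ᵀ]ᵀ be any global minimizer of F(Ω) = (1/2)‖y − Xb − X̄ vec(Φ)‖₂² + λ₁‖X̆‖₂‖Φ‖₁ + λ₂‖X̆‖₂‖Ωᵀ‖_{2,1} over Ω = [b, Φᵀ]ᵀ ∈ ℝ^{(p+1)×p} subject to Φ = Φᵀ. Let Ĵ ⊆ {1,…,p²+p} be the support of vec(Ω̂) under the column indexing of X̆ (so that X̆ vec(Ω̂) = X̆_Ĵ (vec Ω̂)_Ĵ, where X̆_Ĵ is the submatrix of the columns of X̆ indexed by Ĵ). Then λ₁² · J_e(Φ̂) + λ₂² · J_G(b̂, Φ̂) ≤ (2/‖X̆‖₂²) · ‖X̆_Ĵᵀ (X̆ vec(Ω̂) − y)‖₂². -/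
open Matrix MeasureTheory ProbabilityTheory
open scoped Classical

noncomputable section

/-- Spectral norm (ℓ₂ operator norm) of a real matrix:
the supremum of `‖A v‖₂` over vectors `v` with `‖v‖₂ ≤ 1`. -/
def specNorm {ι κ : Type*} [Fintype ι] [Fintype κ] (A : Matrix ι κ ℝ) : ℝ :=
  sSup {c : ℝ | ∃ v : κ → ℝ, (∑ i, v i ^ 2) ≤ 1 ∧
    c = Real.sqrt (∑ i, A.mulVec v i ^ 2)}

/-- The augmented design `X̆ ∈ ℝ^{n×(p²+p)}`: for each `j`, its columns are `x_j`
followed by `x_j ⊙ x_1, …, x_j ⊙ x_p` (column indices are pairs `(j,k)` with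
`k = 0` for `x_j` and `k ≥ 1` for `x_j ⊙ x_k`). -/
def Xbreve {n p : ℕ} (X : Matrix (Fin n) (Fin p) ℝ) :
    Matrix (Fin n) (Fin p × Fin (p + 1)) ℝ :=
  fun i jk => Fin.cases (X i jk.1) (fun k => X i jk.1 * X i k) jk.2

/-- `X b + X̄ vec(Φ)`, where `X̄` has columns `x_j ⊙ x_k`. -/
def Mmap {n p : ℕ} (X : Matrix (Fin n) (Fin p) ℝ) (b : Fin p → ℝ)
    (Φ : Matrix (Fin p) (Fin p) ℝ) : Fin n → ℝ :=
  fun i => X.mulVec b i + ∑ jk : Fin p × Fin p, Φ jk.1 jk.2 * (X i jk.1 * X i jk.2)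

/-- `J_e(Φ)`: number of nonzero entries of `Φ`. -/
def JeCount {p : ℕ} (Φ : Matrix (Fin p) (Fin p) ℝ) : ℕ :=
  (Finset.univ.filter fun jk : Fin p × Fin p => Φ jk.1 jk.2 ≠ 0).card

/-- `J_G(b, Φ)`: number of indices `j` with `b_j² + ‖φ_j‖₂² ≠ 0`
(`φ_j` the `j`-th column of `Φ`). -/
def JGCount {p : ℕ} (b : Fin p → ℝ) (Φ : Matrix (Fin p) (Fin p) ℝ) : ℕ :=
  (Finset.univ.filter fun j : Fin p => b j ≠ 0 ∨ ∃ k, Φ k j ≠ 0).card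

/-- Euclidean norm of the `j`-th column `(b_j, φ_jᵀ)ᵀ` of `Ω = [b, Φᵀ]ᵀ`. -/
def grpNorm {p : ℕ} (b : Fin p → ℝ) (Φ : Matrix (Fin p) (Fin p) ℝ) (j : Fin p) : ℝ :=
  Real.sqrt (b j ^ 2 + ∑ k, Φ k j ^ 2)

/-- The Type-A GRESH criterion
`F(Ω) = (1/2)‖y − Xb − X̄vec(Φ)‖₂² + λ₁‖X̆‖₂‖Φ‖₁ + λ₂‖X̆‖₂‖Ωᵀ‖_{2,1}`. -/
def Fgresh {n p : ℕ} (X : Matrix (Fin n) (Fin p) ℝ) (y : Fin n → ℝ)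
    (lam1 lam2 : ℝ) (b : Fin p → ℝ) (Φ : Matrix (Fin p) (Fin p) ℝ) : ℝ :=
  (1 / 2) * (∑ i, (y i - Mmap X b Φ i) ^ 2)
    + lam1 * specNorm (Xbreve X) * (∑ j, ∑ k, |Φ j k|)
    + lam2 * specNorm (Xbreve X) * ∑ j, grpNorm b Φ j

/-- The law of `ε`: `n`-fold product of the Gaussian `N(0, σ²)`. -/
def gaussPi (n : ℕ) (σ : ℝ) : Measure (Fin n → ℝ) :=
  Measure.pi fun _ : Fin n => gaussianReal 0 ⟨σ ^ 2, sq_nonneg σ⟩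

/-- The coefficient vector of `Ω = [b, Φᵀ]ᵀ` under the column indexing of `X̆`:
entry `(j,0)` is `b_j` and entry `(j,k)` for `k ≥ 1` is `Φ_{jk}`,
so that `X̆ vec(Ω) = X b + X̄ vec(Φ)`. -/
def vecBF {p : ℕ} (b : Fin p → ℝ) (Φ : Matrix (Fin p) (Fin p) ℝ) :
    Fin p × Fin (p + 1) → ℝ :=
  fun jk => Fin.cases (b jk.1) (fun k => Φ jk.1 k) jk.2


-- ===================== auxiliary lemmas =====================

lemma aux_limit {a b e0 : ℝ} (he : 0 < e0) (h : ∀ e, 0 < e → e ≤ e0 → a ≤ e * b) : a ≤ 0 := by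
  by_contra hc
  push_neg at hc
  rcases le_or_gt b 0 with hb | hb
  · have := h e0 he le_rfl
    nlinarith
  · have he2 : 0 < min e0 (a / (2 * b)) := lt_min he (by positivity)
    have h1 := h _ he2 (min_le_left _ _)
    have h3 : min e0 (a / (2 * b)) * b ≤ (a / (2 * b)) * b :=
      mul_le_mul_of_nonneg_right (min_le_right _ _) hb.le
    have h4 : (a / (2 * b)) * b = a / 2 := by field_simp
    linarith

lemma sqrt_pert {x h : ℝ} (hx : 0 < x) (hxh : 0 ≤ x + h) :
    Real.sqrt (x + h) ≤ Real.sqrt x + h / (2 * Real.sqrt x) := by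
  have hs : 0 < Real.sqrt x := Real.sqrt_pos.mpr hx
  have e1 : Real.sqrt x + h / (2 * Real.sqrt x)
      = (2 * Real.sqrt x * Real.sqrt x + h) / (2 * Real.sqrt x) := by
    field_simp
  rw [e1, le_div_iff₀ (by positivity)]
  nlinarith [sq_nonneg (Real.sqrt x - Real.sqrt (x + h)), Real.sq_sqrt hx.le,
    Real.sq_sqrt hxh, Real.sqrt_nonneg (x + h)]

lemma abs_shrink {t d : ℝ} (ht : t ≠ 0) (hd : 0 ≤ d) (hdt : d ≤ |t|) :
    |t - d * (if 0 < t then 1 else -1)| = |t| - d := by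
  rcases lt_trichotomy t 0 with h | h | h
  · rw [if_neg (by linarith), abs_of_neg h] at *
    rw [abs_of_nonpos (by linarith)]
    ring
  · exact absurd h ht
  · rw [if_pos h, abs_of_pos h] at *
    rw [abs_of_nonneg (by linarith)]
    ring

lemma specNorm_pos {ι κ : Type*} [Fintype ι] [Fintype κ] (A : Matrix ι κ ℝ)
    (hA : A ≠ 0) : 0 < specNorm A := by
  obtain ⟨i0, u0, h0⟩ : ∃ i u, A i u ≠ 0 := by
    by_contra hc; push_neg at hc; exact hA (by ext i u; simp [hc])
  have hBdd : BddAbove {c : ℝ | ∃ v : κ → ℝ, (∑ i, v i ^ 2) ≤ 1 ∧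
      c = Real.sqrt (∑ i, A.mulVec v i ^ 2)} := by
    refine ⟨Real.sqrt (∑ i, (∑ u, |A i u|) ^ 2), ?_⟩
    rintro c ⟨v, hv, rfl⟩
    apply Real.sqrt_le_sqrt
    apply Finset.sum_le_sum
    intro i _
    have h1 : |A.mulVec v i| ≤ ∑ u, |A i u| := by
      simp only [Matrix.mulVec, dotProduct]
      refine (Finset.abs_sum_le_sum_abs _ _).trans ?_
      apply Finset.sum_le_sum
      intro u _
      rw [abs_mul]
      have hvu : v u ^ 2 ≤ 1 :=
        le_trans (Finset.single_le_sum (fun i _ => sq_nonneg (v i)) (Finset.mem_univ u)) hv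
      nlinarith [abs_nonneg (A i u), abs_nonneg (v u), sq_abs (v u)]
    calc A.mulVec v i ^ 2 = |A.mulVec v i| ^ 2 := (sq_abs _).symm
      _ ≤ (∑ u, |A i u|) ^ 2 := by
          apply pow_le_pow_left₀ (abs_nonneg _) h1
  have hmem : Real.sqrt (∑ i, A.mulVec (Pi.single u0 1) i ^ 2) ∈
      {c : ℝ | ∃ v : κ → ℝ, (∑ i, v i ^ 2) ≤ 1 ∧
        c = Real.sqrt (∑ i, A.mulVec v i ^ 2)} := by
    refine ⟨Pi.single u0 1, le_of_eq ?_, rfl⟩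
    simp [Pi.single_apply, ite_pow]
  have hle := le_csSup hBdd hmem
  refine lt_of_lt_of_le ?_ hle
  apply Real.sqrt_pos.mpr
  apply Finset.sum_pos' (fun i _ => sq_nonneg _)
  refine ⟨i0, Finset.mem_univ _, ?_⟩
  have hv : A.mulVec (Pi.single u0 1) i0 = A i0 u0 := by
    simp [Matrix.mulVec_single]
  rw [hv]; positivity

lemma mulVec_vecBF {n p : ℕ} (X : Matrix (Fin n) (Fin p) ℝ) (b : Fin p → ℝ)
    (Φ : Matrix (Fin p) (Fin p) ℝ) :
    (Xbreve X).mulVec (vecBF b Φ) = Mmap X b Φ := by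
  funext i
  simp only [Matrix.mulVec, dotProduct, Xbreve, vecBF, Mmap]
  rw [Fintype.sum_prod_type]
  have h1 : ∀ j : Fin p,
      (∑ k : Fin (p+1), (Fin.cases (X i j) (fun k => X i j * X i k) k : ℝ) *
        (Fin.cases (b j) (fun k => Φ j k) k))
      = X i j * b j + ∑ k : Fin p, Φ j k * (X i j * X i k) := by
    intro j
    rw [Fin.sum_univ_succ]
    simp [mul_comm]
  rw [Finset.sum_congr rfl (fun j _ => h1 j), Finset.sum_add_distrib]
  congr 1
  rw [Fintype.sum_prod_type]

lemma grpNorm_nonneg {p : ℕ} (b : Fin p → ℝ) (Φ : Matrix (Fin p) (Fin p) ℝ) (j : Fin p) :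
    0 ≤ grpNorm b Φ j := Real.sqrt_nonneg _

lemma kkt_b {n p : ℕ} (X : Matrix (Fin n) (Fin p) ℝ) (y : Fin n → ℝ)
    (lam1 lam2 : ℝ) (h2 : 0 < lam2) (hs : 0 < specNorm (Xbreve X))
    (bh : Fin p → ℝ) (Φh : Matrix (Fin p) (Fin p) ℝ) (hsym : Φh = Φhᵀ)
    (hmin : ∀ (b : Fin p → ℝ) (Φ : Matrix (Fin p) (Fin p) ℝ), Φ = Φᵀ →
      Fgresh X y lam1 lam2 bh Φh ≤ Fgresh X y lam1 lam2 b Φ)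
    (j : Fin p) (hbj : bh j ≠ 0) :
    lam2 * specNorm (Xbreve X) * |bh j| / grpNorm bh Φh j
      ≤ |∑ i, X i j * (Mmap X bh Φh i - y i)| := by
  set s := specNorm (Xbreve X) with hsdef
  set N := grpNorm bh Φh j with hNdef
  set g := ∑ i, X i j * (Mmap X bh Φh i - y i) with hgdef
  set σ : ℝ := if 0 < bh j then 1 else -1 with hσdef
  have hσsq : σ * σ = 1 := by rw [hσdef]; split <;> norm_num
  have hσb : σ * bh j = |bh j| := by
    rw [hσdef]; split
    · rw [one_mul, abs_of_pos ‹_›]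
    · rw [neg_one_mul, abs_of_neg (lt_of_le_of_ne (not_lt.mp ‹_›) hbj)]
  have hNpos : 0 < N := by
    rw [hNdef, grpNorm]
    apply Real.sqrt_pos.mpr
    have : 0 ≤ ∑ k, Φh k j ^ 2 := Finset.sum_nonneg fun k _ => sq_nonneg _
    positivity
  have key : σ * g + lam2 * s * |bh j| / N ≤ 0 := by
    apply aux_limit (e0 := 1)
      (b := (∑ i, X i j ^ 2) / 2 + lam2 * s / (2 * N)) one_pos
    intro ε hε hε1
    set b' : Fin p → ℝ := bh - (ε * σ) • (Pi.single j 1 : Fin p → ℝ) with hb'def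
    have hb'j : b' j = bh j - ε * σ := by simp [hb'def]
    have hb'ne : ∀ l, l ≠ j → b' l = bh l := by
      intro l hl; simp [hb'def, Pi.single_apply, hl]
    have hF := hmin b' Φh hsym
    have hM : ∀ i, Mmap X b' Φh i = Mmap X bh Φh i - (ε * σ) * X i j := by
      intro i
      simp only [Mmap, hb'def, Matrix.mulVec_sub, Matrix.mulVec_smul,
        Matrix.mulVec_single, Pi.sub_apply, Pi.smul_apply, smul_eq_mul,
        op_smul_eq_mul, Matrix.col_apply, mul_one]
      ring
    have hsmooth : (∑ i, (y i - Mmap X b' Φh i) ^ 2)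
        = (∑ i, (y i - Mmap X bh Φh i) ^ 2)
          + ((-(2 * ε * σ)) * g + ε ^ 2 * (∑ i, X i j ^ 2)) := by
      have hterm : ∀ i, (y i - Mmap X b' Φh i) ^ 2
          = (y i - Mmap X bh Φh i) ^ 2
            + ((-(2 * ε * σ)) * (X i j * (Mmap X bh Φh i - y i)) + ε ^ 2 * X i j ^ 2) := by
        intro i
        rw [hM i]
        linear_combination (ε ^ 2 * X i j ^ 2) * hσsq
      rw [Finset.sum_congr rfl fun i _ => hterm i, Finset.sum_add_distrib,
        Finset.sum_add_distrib, ← Finset.mul_sum, ← Finset.mul_sum, ← hgdef]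
    have hgrp : ∀ l, grpNorm b' Φh l ≤ grpNorm bh Φh l
        + (if l = j then (ε ^ 2 - 2 * ε * |bh j|) / (2 * N) else 0) := by
      intro l
      by_cases hl : l = j
      · subst hl
        rw [if_pos rfl, grpNorm, grpNorm, hb'j]
        have hexp : (bh l - ε * σ) ^ 2 + ∑ k, Φh k l ^ 2
            = (bh l ^ 2 + ∑ k, Φh k l ^ 2) + (ε ^ 2 - 2 * ε * |bh l|) := by
          rw [← hσb]
          linear_combination (ε ^ 2) * hσsq
        rw [hexp]
        have hsum0 : 0 ≤ ∑ k, Φh k l ^ 2 := Finset.sum_nonneg fun k _ => sq_nonneg _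
        have hx : 0 < bh l ^ 2 + ∑ k, Φh k l ^ 2 := by positivity
        have hxh : 0 ≤ (bh l ^ 2 + ∑ k, Φh k l ^ 2) + (ε ^ 2 - 2 * ε * |bh l|) := by
          rw [← hexp]; positivity
        have := sqrt_pert hx hxh
        rw [hNdef, grpNorm]
        exact this
      · rw [if_neg hl, add_zero, grpNorm, grpNorm, hb'ne l hl]
    have hgrpsum : (∑ l, grpNorm b' Φh l)
        ≤ (∑ l, grpNorm bh Φh l) + (ε ^ 2 - 2 * ε * |bh j|) / (2 * N) := by
      calc (∑ l, grpNorm b' Φh l)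
          ≤ ∑ l, (grpNorm bh Φh l + (if l = j then (ε ^ 2 - 2 * ε * |bh j|) / (2 * N) else 0)) :=
            Finset.sum_le_sum fun l _ => hgrp l
        _ = (∑ l, grpNorm bh Φh l) + (ε ^ 2 - 2 * ε * |bh j|) / (2 * N) := by
            rw [Finset.sum_add_distrib, Finset.sum_ite_eq' Finset.univ j]
            simp
    rw [Fgresh, Fgresh, hsmooth] at hF
    have hmul := mul_le_mul_of_nonneg_left hgrpsum (by positivity : (0:ℝ) ≤ lam2 * s)
    have expand : lam2 * s * ((∑ l, grpNorm bh Φh l) + (ε ^ 2 - 2 * ε * |bh j|) / (2 * N))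
        = lam2 * s * (∑ l, grpNorm bh Φh l)
          - ε * (lam2 * s * |bh j| / N) + ε ^ 2 * (lam2 * s / (2 * N)) := by
      field_simp
      ring
    rw [expand] at hmul
    have hfinal : ε * (σ * g + lam2 * s * |bh j| / N)
        ≤ ε * (ε * ((∑ i, X i j ^ 2) / 2 + lam2 * s / (2 * N))) := by
      nlinarith [hF, hmul]
    exact le_of_mul_le_mul_left hfinal hε
  have habs : -(σ * g) ≤ |g| := by
    have h1 : |σ * g| = |g| := by rw [abs_mul, hσdef]; split <;> simp
    calc -(σ * g) ≤ |σ * g| := neg_le_abs _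
      _ = |g| := h1
  linarith

set_option maxHeartbeats 1000000 in
lemma kkt_phi {n p : ℕ} (X : Matrix (Fin n) (Fin p) ℝ) (y : Fin n → ℝ)
    (lam1 lam2 : ℝ) (h1 : 0 < lam1) (h2 : 0 < lam2) (hs : 0 < specNorm (Xbreve X))
    (bh : Fin p → ℝ) (Φh : Matrix (Fin p) (Fin p) ℝ) (hsym : Φh = Φhᵀ)
    (hmin : ∀ (b : Fin p → ℝ) (Φ : Matrix (Fin p) (Fin p) ℝ), Φ = Φᵀ →
      Fgresh X y lam1 lam2 bh Φh ≤ Fgresh X y lam1 lam2 b Φ)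
    (j k : Fin p) (hjk : Φh j k ≠ 0) :
    lam1 * specNorm (Xbreve X)
      + lam2 * specNorm (Xbreve X) * (|Φh j k| / (2 * grpNorm bh Φh j)
          + |Φh j k| / (2 * grpNorm bh Φh k))
      ≤ |∑ i, (X i j * X i k) * (Mmap X bh Φh i - y i)| := by
  set s := specNorm (Xbreve X) with hsdef
  set g := ∑ i, (X i j * X i k) * (Mmap X bh Φh i - y i) with hgdef
  set σ : ℝ := if 0 < Φh j k then 1 else -1 with hσdef
  have hσsq : σ * σ = 1 := by rw [hσdef]; split <;> norm_num
  have hσΦ : σ * Φh j k = |Φh j k| := by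
    rw [hσdef]; split
    · rw [one_mul, abs_of_pos ‹_›]
    · rw [neg_one_mul, abs_of_neg (lt_of_le_of_ne (not_lt.mp ‹_›) hjk)]
  have habsσ : ∀ t : ℝ, |σ * t| = |t| := by
    intro t; rw [abs_mul, hσdef]; split <;> simp
  have hshrink : ∀ d : ℝ, 0 ≤ d → d ≤ |Φh j k| → |Φh j k - d * σ| = |Φh j k| - d := by
    intro d hd hdt
    rw [hσdef]
    exact abs_shrink hjk hd hdt
  clear_value σ
  have hkj : Φh k j = Φh j k := by
    have := congrFun (congrFun hsym.symm j) k
    rwa [Matrix.transpose_apply] at this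
  have hNk : 0 < grpNorm bh Φh k := by
    rw [grpNorm]
    apply Real.sqrt_pos.mpr
    have hsum : 0 < ∑ a, Φh a k ^ 2 :=
      lt_of_lt_of_le (by positivity)
        (Finset.single_le_sum (f := fun a => Φh a k ^ 2)
          (fun a _ => sq_nonneg _) (Finset.mem_univ j))
    positivity
  have hNj : 0 < grpNorm bh Φh j := by
    rw [grpNorm]
    apply Real.sqrt_pos.mpr
    have hne : Φh k j ≠ 0 := by rw [hkj]; exact hjk
    have hsum : 0 < ∑ a, Φh a j ^ 2 :=
      lt_of_lt_of_le (by positivity)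
        (Finset.single_le_sum (f := fun a => Φh a j ^ 2)
          (fun a _ => sq_nonneg _) (Finset.mem_univ k))
    positivity
  -- the perturbation direction
  set E : Matrix (Fin p) (Fin p) ℝ :=
    fun a c => (if a = j ∧ c = k then 1 else 0) + (if a = k ∧ c = j then 1 else 0) with hEdef
  have hEnonneg : ∀ a c, 0 ≤ E a c := by
    intro a c; rw [hEdef]; dsimp only; split <;> split <;> norm_num
  have hEle2 : ∀ a c, E a c ≤ 2 := by
    intro a c; rw [hEdef]; dsimp only; split <;> split <;> norm_num
  have hET : Eᵀ = E := by
    have hEc : ∀ a c, E a c = E c a := by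
      intro a c
      rw [hEdef]
      dsimp only
      rw [add_comm]
      congr 1
      · exact if_congr and_comm rfl rfl
      · exact if_congr and_comm rfl rfl
    ext a c
    rw [Matrix.transpose_apply]
    exact hEc c a
  have hΦE : ∀ a c, Φh a c * E a c = Φh j k * E a c := by
    intro a c
    rw [hEdef]
    dsimp only
    by_cases hh1 : a = j ∧ c = k <;> by_cases hh2 : a = k ∧ c = j
    · rw [hh1.1, hh1.2]
    · rw [hh1.1, hh1.2]
    · rw [hh2.1, hh2.2, hkj]
    · simp [hh1, hh2]
  have hEsum : ∀ W : Fin p → Fin p → ℝ,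
      (∑ ac : Fin p × Fin p, E ac.1 ac.2 * W ac.1 ac.2) = W j k + W k j := by
    intro W
    have hterm : ∀ ac : Fin p × Fin p, E ac.1 ac.2 * W ac.1 ac.2
        = (if ac = (j, k) then W j k else 0) + (if ac = (k, j) then W k j else 0) := by
      rintro ⟨a, c⟩
      rw [hEdef]
      dsimp only
      by_cases hh1 : a = j ∧ c = k <;> by_cases hh2 : a = k ∧ c = j
      · rw [if_pos hh1, if_pos hh2, if_pos (by simp [Prod.ext_iff, hh1.1, hh1.2]),
          if_pos (by simp [Prod.ext_iff, hh2.1, hh2.2]), hh1.1, hh1.2]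
        rw [hh1.1, hh1.2] at hh2
        rw [← hh2.1, ← hh2.2]
        ring
      · rw [if_pos hh1, if_neg hh2, if_pos (by simp [Prod.ext_iff, hh1.1, hh1.2]),
          if_neg (by simp [Prod.ext_iff]; tauto), hh1.1, hh1.2]
        ring
      · rw [if_neg hh1, if_pos hh2, if_neg (by simp [Prod.ext_iff]; tauto),
          if_pos (by simp [Prod.ext_iff, hh2.1, hh2.2]), hh2.1, hh2.2]
        ring
      · rw [if_neg hh1, if_neg hh2, if_neg (by simp [Prod.ext_iff]; tauto),
          if_neg (by simp [Prod.ext_iff]; tauto)]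
        ring
    rw [Finset.sum_congr rfl fun ac _ => hterm ac, Finset.sum_add_distrib,
      Finset.sum_ite_eq' Finset.univ (j, k), Finset.sum_ite_eq' Finset.univ (k, j)]
    simp
  have hS1 : ∀ c, (∑ a, E a c) = (if c = k then 1 else 0) + (if c = j then 1 else 0) := by
    intro c
    rw [hEdef]
    dsimp only
    rw [Finset.sum_add_distrib]
    congr 1
    · by_cases hc : c = k
      · rw [if_pos hc, Finset.sum_congr rfl fun a _ => if_congr (and_iff_left hc) rfl rfl,
          Finset.sum_ite_eq' Finset.univ j (fun _ => (1:ℝ))]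
        simp
      · rw [if_neg hc, Finset.sum_congr rfl fun a _ =>
          if_neg (fun h : a = j ∧ c = k => hc h.2)]
        simp
    · by_cases hc : c = j
      · rw [if_pos hc, Finset.sum_congr rfl fun a _ => if_congr (and_iff_left hc) rfl rfl,
          Finset.sum_ite_eq' Finset.univ k (fun _ => (1:ℝ))]
        simp
      · rw [if_neg hc, Finset.sum_congr rfl fun a _ =>
          if_neg (fun h : a = k ∧ c = j => hc h.2)]
        simp
  have hEzero : ∀ c, ¬(c = j ∨ c = k) → ∀ a, E a c = 0 := by
    intro c hc a
    push_neg at hc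
    rw [hEdef]
    dsimp only
    rw [if_neg (fun h : a = j ∧ c = k => hc.2 h.2), if_neg (fun h : a = k ∧ c = j => hc.1 h.2)]
    norm_num
  clear_value E
  have hE2sum : (∑ a, ∑ c, E a c) = 2 := by
    rw [show (∑ a, ∑ c, E a c) = ∑ c, ∑ a, E a c from Finset.sum_comm,
      Finset.sum_congr rfl fun c _ => hS1 c, Finset.sum_add_distrib]
    simp
    norm_num
  -- closed form of the group multiplier
  set Dv : ℝ := 1 / (2 * grpNorm bh Φh k) + 1 / (2 * grpNorm bh Φh j) with hDvdef
  set Rv : ℝ := ∑ c, (∑ a, (E a c) ^ 2) / (2 * grpNorm bh Φh c) with hRvdef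
  have hDsum : (∑ c, (∑ a, E a c) / (2 * grpNorm bh Φh c)) = Dv := by
    have hterm : ∀ c, (∑ a, E a c) / (2 * grpNorm bh Φh c)
        = (if c = k then 1 / (2 * grpNorm bh Φh c) else 0)
          + (if c = j then 1 / (2 * grpNorm bh Φh c) else 0) := by
      intro c
      rw [hS1 c]
      split_ifs <;> ring
    rw [Finset.sum_congr rfl fun c _ => hterm c, Finset.sum_add_distrib,
      Finset.sum_ite_eq' Finset.univ k, Finset.sum_ite_eq' Finset.univ j, hDvdef]
    simp [add_comm]
  have habsjk : 0 < |Φh j k| := abs_pos.mpr hjk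
  -- main KKT inequality via perturbation
  have key : 2 * (σ * g) + 2 * lam1 * s + 2 * lam2 * s * |Φh j k| * Dv ≤ 0 := by
    apply aux_limit (e0 := |Φh j k| / 2)
      (b := 2 * (∑ i, (X i j * X i k) ^ 2) + lam2 * s * Rv) (by positivity)
    intro ε hε he0
    set Φ' : Matrix (Fin p) (Fin p) ℝ := Φh - (ε * σ) • E with hΦ'def
    have hΦ'app : ∀ a c, Φ' a c = Φh a c - (ε * σ) * E a c := by
      intro a c
      rw [hΦ'def]
      simp [Matrix.sub_apply, Matrix.smul_apply, smul_eq_mul]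
    have hsym' : Φ' = Φ'ᵀ := by
      rw [hΦ'def, Matrix.transpose_sub, Matrix.transpose_smul, hET, ← hsym]
    have hF := hmin bh Φ' hsym'
    clear_value Φ'
    -- model values
    have hM : ∀ i, Mmap X bh Φ' i
        = Mmap X bh Φh i - (ε * σ) * (X i j * X i k + X i k * X i j) := by
      intro i
      rw [Mmap, Mmap]
      have hterm : ∀ ac : Fin p × Fin p, Φ' ac.1 ac.2 * (X i ac.1 * X i ac.2)
          = Φh ac.1 ac.2 * (X i ac.1 * X i ac.2)
            - (ε * σ) * (E ac.1 ac.2 * (X i ac.1 * X i ac.2)) := by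
        intro ac; rw [hΦ'app]; ring
      rw [Finset.sum_congr rfl fun ac _ => hterm ac, Finset.sum_sub_distrib,
        ← Finset.mul_sum, hEsum fun a c => X i a * X i c]
      ring
    -- smooth part
    have hsmooth : (∑ i, (y i - Mmap X bh Φ' i) ^ 2)
        = (∑ i, (y i - Mmap X bh Φh i) ^ 2)
          + ((-(4 * ε * σ)) * g + ε ^ 2 * (4 * ∑ i, (X i j * X i k) ^ 2)) := by
      have hterm : ∀ i, (y i - Mmap X bh Φ' i) ^ 2
          = (y i - Mmap X bh Φh i) ^ 2
            + ((-(4 * ε * σ)) * ((X i j * X i k) * (Mmap X bh Φh i - y i))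
              + ε ^ 2 * (4 * (X i j * X i k) ^ 2)) := by
        intro i
        rw [hM i]
        linear_combination (4 * ε ^ 2 * (X i j * X i k) ^ 2) * hσsq
      rw [Finset.sum_congr rfl fun i _ => hterm i, Finset.sum_add_distrib,
        Finset.sum_add_distrib, ← Finset.mul_sum, ← Finset.mul_sum, ← hgdef,
        ← Finset.mul_sum]
    -- ℓ1 part
    have hl1entry : ∀ a c, |Φ' a c| = |Φh a c| - ε * E a c := by
      intro a c
      by_cases hE0 : E a c = 0
      · rw [hΦ'app, hE0]
        simp
      · have hval : Φh a c = Φh j k := mul_right_cancel₀ hE0 (hΦE a c)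
        have hd1 : 0 ≤ ε * E a c := mul_nonneg hε.le (hEnonneg a c)
        have hd2 : ε * E a c ≤ |Φh j k| := by
          calc ε * E a c ≤ ε * 2 := mul_le_mul_of_nonneg_left (hEle2 a c) hε.le
            _ ≤ |Φh j k| := by linarith
        have hsh := hshrink (ε * E a c) hd1 hd2
        rw [hΦ'app, hval]
        rw [show Φh j k - ε * σ * E a c = Φh j k - ε * E a c * σ from by ring]
        exact hsh
    have hl1sum : (∑ a, ∑ c, |Φ' a c|) = (∑ a, ∑ c, |Φh a c|) - ε * 2 := by
      have hrow : ∀ a, (∑ c, |Φ' a c|) = (∑ c, |Φh a c|) - ε * (∑ c, E a c) := by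
        intro a
        rw [Finset.sum_congr rfl fun c _ => hl1entry a c, Finset.sum_sub_distrib,
          ← Finset.mul_sum]
      rw [Finset.sum_congr rfl fun a _ => hrow a, Finset.sum_sub_distrib,
        ← Finset.mul_sum, hE2sum]
    -- group part
    have hΦ'sq : ∀ a c, (Φ' a c) ^ 2
        = Φh a c ^ 2 + (ε ^ 2 * (E a c) ^ 2 - 2 * ε * |Φh j k| * E a c) := by
      intro a c
      rw [hΦ'app]
      linear_combination (-2 * ε * σ) * hΦE a c + (-2 * ε * E a c) * hσΦ
        + (ε ^ 2 * (E a c) ^ 2) * hσsq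
    have hcolsq : ∀ c, (∑ a, (Φ' a c) ^ 2)
        = (∑ a, Φh a c ^ 2)
          + (ε ^ 2 * (∑ a, (E a c) ^ 2) - 2 * ε * |Φh j k| * (∑ a, E a c)) := by
      intro c
      rw [Finset.sum_congr rfl fun a _ => hΦ'sq a c, Finset.sum_add_distrib,
        Finset.sum_sub_distrib, ← Finset.mul_sum, ← Finset.mul_sum]
    have hcol : ∀ c, grpNorm bh Φ' c ≤ grpNorm bh Φh c
        + (ε ^ 2 * (∑ a, (E a c) ^ 2) - 2 * ε * |Φh j k| * (∑ a, E a c))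
          / (2 * grpNorm bh Φh c) := by
      intro c
      by_cases hc : c = j ∨ c = k
      · have hNc : 0 < grpNorm bh Φh c := by
          rcases hc with hc | hc <;> rw [hc]
          exacts [hNj, hNk]
        have hx : 0 < bh c ^ 2 + ∑ a, Φh a c ^ 2 := by
          rw [grpNorm] at hNc
          exact Real.sqrt_pos.mp hNc
        have harg : bh c ^ 2 + ∑ a, (Φ' a c) ^ 2
            = (bh c ^ 2 + ∑ a, Φh a c ^ 2)
              + (ε ^ 2 * (∑ a, (E a c) ^ 2) - 2 * ε * |Φh j k| * (∑ a, E a c)) := by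
          rw [hcolsq c]; ring
        have hxh : 0 ≤ (bh c ^ 2 + ∑ a, Φh a c ^ 2)
            + (ε ^ 2 * (∑ a, (E a c) ^ 2) - 2 * ε * |Φh j k| * (∑ a, E a c)) := by
          rw [← harg]
          have h0 : 0 ≤ ∑ a, (Φ' a c) ^ 2 := Finset.sum_nonneg fun a _ => sq_nonneg _
          positivity
        have hb1 : grpNorm bh Φ' c
            = Real.sqrt ((bh c ^ 2 + ∑ a, Φh a c ^ 2)
              + (ε ^ 2 * (∑ a, (E a c) ^ 2) - 2 * ε * |Φh j k| * (∑ a, E a c))) := by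
          rw [grpNorm, harg]
        have hb2 : grpNorm bh Φh c = Real.sqrt (bh c ^ 2 + ∑ a, Φh a c ^ 2) := by
          rw [grpNorm]
        rw [hb1, hb2]
        exact sqrt_pert hx hxh
      · have hE0 := hEzero c hc
        have hsumE : (∑ a, E a c) = 0 := by simp [hE0]
        have hsumE2 : (∑ a, (E a c) ^ 2) = 0 := by simp [hE0]
        have hcoleq : ∀ a, Φ' a c = Φh a c := by
          intro a; rw [hΦ'app, hE0]; ring
        rw [grpNorm, grpNorm, Finset.sum_congr rfl fun a _ => by rw [hcoleq a],
          hsumE, hsumE2]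
        simp
    have hgrpsum : (∑ c, grpNorm bh Φ' c)
        ≤ (∑ c, grpNorm bh Φh c) + (ε ^ 2 * Rv - 2 * ε * |Φh j k| * Dv) := by
      calc (∑ c, grpNorm bh Φ' c)
          ≤ ∑ c, (grpNorm bh Φh c
            + (ε ^ 2 * (∑ a, (E a c) ^ 2) - 2 * ε * |Φh j k| * (∑ a, E a c))
              / (2 * grpNorm bh Φh c)) := Finset.sum_le_sum fun c _ => hcol c
        _ = (∑ c, grpNorm bh Φh c)
            + (ε ^ 2 * Rv - 2 * ε * |Φh j k| * Dv) := by
            rw [Finset.sum_add_distrib]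
            congr 1
            have hterm : ∀ c, (ε ^ 2 * (∑ a, (E a c) ^ 2)
                - 2 * ε * |Φh j k| * (∑ a, E a c)) / (2 * grpNorm bh Φh c)
                = ε ^ 2 * ((∑ a, (E a c) ^ 2) / (2 * grpNorm bh Φh c))
                  - 2 * ε * |Φh j k| * ((∑ a, E a c) / (2 * grpNorm bh Φh c)) := by
              intro c; ring
            rw [Finset.sum_congr rfl fun c _ => hterm c, Finset.sum_sub_distrib,
              ← Finset.mul_sum, ← Finset.mul_sum, ← hRvdef, hDsum]
    -- assemble
    rw [Fgresh, Fgresh, hsmooth, hl1sum] at hF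
    have hmul := mul_le_mul_of_nonneg_left hgrpsum (by positivity : (0:ℝ) ≤ lam2 * s)
    have hexp : lam2 * s * ((∑ c, grpNorm bh Φh c) + (ε ^ 2 * Rv - 2 * ε * |Φh j k| * Dv))
        = lam2 * s * (∑ c, grpNorm bh Φh c) + ε ^ 2 * (lam2 * s * Rv)
          - ε * (2 * lam2 * s * |Φh j k| * Dv) := by ring
    rw [hexp] at hmul
    clear_value Dv Rv
    have hfinal : ε * (2 * (σ * g) + 2 * lam1 * s + 2 * lam2 * s * |Φh j k| * Dv)
        ≤ ε * (ε * (2 * (∑ i, (X i j * X i k) ^ 2) + lam2 * s * Rv)) := by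
      nlinarith [hF, hmul]
    exact le_of_mul_le_mul_left hfinal hε
  have habs : -(σ * g) ≤ |g| := by
    calc -(σ * g) ≤ |σ * g| := neg_le_abs _
      _ = |g| := habsσ g
  have hrw : 2 * lam2 * s * |Φh j k| * Dv
      = 2 * (lam2 * s * (|Φh j k| / (2 * grpNorm bh Φh j)
        + |Φh j k| / (2 * grpNorm bh Φh k))) := by
    rw [hDvdef]; ring
  clear_value s g Dv
  linarith

set_option maxHeartbeats 1600000 in
/-- **KKT cardinality inequality for Type-A GRESH minimizers** (key optimization
inequality in the proof of Theorem 2):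
`λ₁² J_e(Φ̂) + λ₂² J_G(b̂, Φ̂) ≤ (2/‖X̆‖₂²)‖X̆_Ĵᵀ(X̆ vec(Ω̂) − y)‖₂²`,
where `Ĵ` is the support of `vec(Ω̂)`. -/
theorem gresh_kkt_cardinality {n p : ℕ} (hn : 1 ≤ n) (hp : 1 ≤ p)
    (X : Matrix (Fin n) (Fin p) ℝ) (y : Fin n → ℝ) (hX : Xbreve X ≠ 0)
    (lam1 lam2 : ℝ) (h1 : 0 < lam1) (h2 : 0 < lam2)
    (bh : Fin p → ℝ) (Φh : Matrix (Fin p) (Fin p) ℝ) (hsym : Φh = Φhᵀ)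
    (hmin : ∀ (b : Fin p → ℝ) (Φ : Matrix (Fin p) (Fin p) ℝ), Φ = Φᵀ →
      Fgresh X y lam1 lam2 bh Φh ≤ Fgresh X y lam1 lam2 b Φ) :
    lam1 ^ 2 * (JeCount Φh : ℝ) + lam2 ^ 2 * (JGCount bh Φh : ℝ)
      ≤ (2 / specNorm (Xbreve X) ^ 2) *
          ∑ u ∈ Finset.univ.filter (fun u : Fin p × Fin (p + 1) => vecBF bh Φh u ≠ 0),
            (∑ i, Xbreve X i u * ((Xbreve X).mulVec (vecBF bh Φh) i - y i)) ^ 2 := by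
  classical
  set s := specNorm (Xbreve X) with hsdef
  have hs : 0 < s := specNorm_pos _ hX
  simp only [mulVec_vecBF]
  -- decompose the support sum
  have hT : (∑ u ∈ Finset.univ.filter (fun u : Fin p × Fin (p + 1) => vecBF bh Φh u ≠ 0),
        (∑ i, Xbreve X i u * (Mmap X bh Φh i - y i)) ^ 2)
      = ∑ j, ((if bh j ≠ 0 then (∑ i, X i j * (Mmap X bh Φh i - y i)) ^ 2 else 0)
          + ∑ k, (if Φh j k ≠ 0 then
              (∑ i, (X i j * X i k) * (Mmap X bh Φh i - y i)) ^ 2 else 0)) := by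
    rw [Finset.sum_filter, Fintype.sum_prod_type]
    refine Finset.sum_congr rfl fun j _ => ?_
    rw [Fin.sum_univ_succ]
    simp [vecBF, Xbreve]
    congr 1
    · by_cases h : bh j = 0
      · rw [if_pos h]; exact if_neg (not_not.mpr h)
      · rw [if_neg h]; exact if_pos h
    · refine Finset.sum_congr rfl fun k _ => ?_
      by_cases h : Φh j k = 0
      · rw [if_pos h]; exact if_neg (not_not.mpr h)
      · rw [if_neg h]; exact if_pos h
  rw [hT]
  -- per-coordinate lower bounds
  have hb_bound : ∀ j, lam2 ^ 2 * s ^ 2 * (bh j) ^ 2 / (grpNorm bh Φh j) ^ 2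
      ≤ (if bh j ≠ 0 then (∑ i, X i j * (Mmap X bh Φh i - y i)) ^ 2 else 0) := by
    intro j
    by_cases hbj : bh j = 0
    · simp [hbj]
    · rw [if_pos hbj]
      have hk := kkt_b X y lam1 lam2 h2 hs bh Φh hsym hmin j hbj
      have hnn : 0 ≤ lam2 * s * |bh j| / grpNorm bh Φh j :=
        div_nonneg (by positivity) (grpNorm_nonneg _ _ _)
      have hsq := mul_self_le_mul_self hnn hk
      rw [abs_mul_abs_self] at hsq
      calc lam2 ^ 2 * s ^ 2 * (bh j) ^ 2 / (grpNorm bh Φh j) ^ 2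
          = (lam2 * s * |bh j| / grpNorm bh Φh j) * (lam2 * s * |bh j| / grpNorm bh Φh j) := by
            rw [← sq_abs (bh j)]; ring
        _ ≤ _ := by
            rw [sq]; exact hsq
  have hp_bound : ∀ j k, (if Φh j k ≠ 0 then lam1 ^ 2 * s ^ 2 else 0)
      + lam2 ^ 2 * s ^ 2 / 4 * ((Φh j k) ^ 2 / (grpNorm bh Φh j) ^ 2
          + (Φh j k) ^ 2 / (grpNorm bh Φh k) ^ 2)
      ≤ (if Φh j k ≠ 0 then (∑ i, (X i j * X i k) * (Mmap X bh Φh i - y i)) ^ 2 else 0) := by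
    intro j k
    by_cases hjk : Φh j k = 0
    · simp [hjk]
    · rw [if_pos hjk, if_pos hjk]
      have hk := kkt_phi X y lam1 lam2 h1 h2 hs bh Φh hsym hmin j k hjk
      have hgj := grpNorm_nonneg bh Φh j
      have hgk := grpNorm_nonneg bh Φh k
      have t1 : 0 ≤ |Φh j k| / (2 * grpNorm bh Φh j) :=
        div_nonneg (abs_nonneg _) (by linarith)
      have t2 : 0 ≤ |Φh j k| / (2 * grpNorm bh Φh k) :=
        div_nonneg (abs_nonneg _) (by linarith)
      have hnn : 0 ≤ lam1 * s + lam2 * s * (|Φh j k| / (2 * grpNorm bh Φh j)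
          + |Φh j k| / (2 * grpNorm bh Φh k)) :=
        add_nonneg (by positivity) (mul_nonneg (by positivity) (add_nonneg t1 t2))
      have hsq := mul_self_le_mul_self hnn hk
      rw [abs_mul_abs_self] at hsq
      have hid : (lam1 * s + lam2 * s * (|Φh j k| / (2 * grpNorm bh Φh j)
            + |Φh j k| / (2 * grpNorm bh Φh k)))
          * (lam1 * s + lam2 * s * (|Φh j k| / (2 * grpNorm bh Φh j)
            + |Φh j k| / (2 * grpNorm bh Φh k)))
          = lam1 ^ 2 * s ^ 2 + lam2 ^ 2 * s ^ 2 / 4 * ((Φh j k) ^ 2 / (grpNorm bh Φh j) ^ 2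
              + (Φh j k) ^ 2 / (grpNorm bh Φh k) ^ 2)
            + (2 * (lam1 * s) * (lam2 * s * (|Φh j k| / (2 * grpNorm bh Φh j)
                + |Φh j k| / (2 * grpNorm bh Φh k)))
              + 2 * (lam2 ^ 2 * s ^ 2) * ((|Φh j k| / (2 * grpNorm bh Φh j))
                * (|Φh j k| / (2 * grpNorm bh Φh k)))) := by
        rw [← sq_abs (Φh j k)]
        ring
      have hcross : 0 ≤ 2 * (lam1 * s) * (lam2 * s * (|Φh j k| / (2 * grpNorm bh Φh j)
            + |Φh j k| / (2 * grpNorm bh Φh k)))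
          + 2 * (lam2 ^ 2 * s ^ 2) * ((|Φh j k| / (2 * grpNorm bh Φh j))
            * (|Φh j k| / (2 * grpNorm bh Φh k))) := by positivity
      linarith [hsq, hid.ge, hid.le]
  -- sum the lower bounds
  have hsum_le : (∑ j, (lam2 ^ 2 * s ^ 2 * (bh j) ^ 2 / (grpNorm bh Φh j) ^ 2
        + ∑ k, ((if Φh j k ≠ 0 then lam1 ^ 2 * s ^ 2 else 0)
          + lam2 ^ 2 * s ^ 2 / 4 * ((Φh j k) ^ 2 / (grpNorm bh Φh j) ^ 2
            + (Φh j k) ^ 2 / (grpNorm bh Φh k) ^ 2))))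
      ≤ ∑ j, ((if bh j ≠ 0 then (∑ i, X i j * (Mmap X bh Φh i - y i)) ^ 2 else 0)
          + ∑ k, (if Φh j k ≠ 0 then
              (∑ i, (X i j * X i k) * (Mmap X bh Φh i - y i)) ^ 2 else 0)) :=
    Finset.sum_le_sum fun j _ => add_le_add (hb_bound j)
      (Finset.sum_le_sum fun k _ => hp_bound j k)
  -- identify the Je part
  have hJe : (∑ j, ∑ k, (if Φh j k ≠ 0 then lam1 ^ 2 * s ^ 2 else 0))
      = lam1 ^ 2 * s ^ 2 * (JeCount Φh : ℝ) := by
    rw [show (∑ j, ∑ k, (if Φh j k ≠ 0 then lam1 ^ 2 * s ^ 2 else 0))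
        = ∑ jk : Fin p × Fin p, (if Φh jk.1 jk.2 ≠ 0 then lam1 ^ 2 * s ^ 2 else 0) from
      (Fintype.sum_prod_type
        (f := fun jk : Fin p × Fin p => if Φh jk.1 jk.2 ≠ 0 then lam1 ^ 2 * s ^ 2 else 0)).symm,
      ← Finset.sum_filter, Finset.sum_const, nsmul_eq_mul, JeCount, mul_comm]
  -- symmetry swap for the second quarter
  have hswap : (∑ j, ∑ k, (Φh j k) ^ 2 / (grpNorm bh Φh k) ^ 2)
      = ∑ j, ∑ k, (Φh j k) ^ 2 / (grpNorm bh Φh j) ^ 2 := by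
    rw [Finset.sum_comm]
    refine Finset.sum_congr rfl fun j _ => Finset.sum_congr rfl fun k _ => ?_
    have : Φh k j = Φh j k := by
      have := congrFun (congrFun hsym.symm j) k
      rwa [Matrix.transpose_apply] at this
    rw [this]
  -- group indicator bound per j
  have hJG_per : ∀ j, lam2 ^ 2 * s ^ 2 / 2 * (if bh j ≠ 0 ∨ ∃ k, Φh k j ≠ 0 then (1:ℝ) else 0)
      ≤ lam2 ^ 2 * s ^ 2 * (bh j) ^ 2 / (grpNorm bh Φh j) ^ 2
        + lam2 ^ 2 * s ^ 2 / 2 * ((∑ k, (Φh j k) ^ 2) / (grpNorm bh Φh j) ^ 2) := by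
    intro j
    have hrowcol : (∑ k, (Φh j k) ^ 2) = ∑ k, (Φh k j) ^ 2 := by
      refine Finset.sum_congr rfl fun k _ => ?_
      have heq : Φh j k = Φh k j := by
        have h0 := congrFun (congrFun hsym.symm k) j
        rwa [Matrix.transpose_apply] at h0
      rw [heq]
    by_cases hact : bh j ≠ 0 ∨ ∃ k, Φh k j ≠ 0
    · rw [if_pos hact]
      have hpos : 0 < bh j ^ 2 + ∑ k, Φh k j ^ 2 := by
        rcases hact with hb | ⟨k0, hk0⟩
        · have : 0 ≤ ∑ k, Φh k j ^ 2 := Finset.sum_nonneg fun k _ => sq_nonneg _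
          positivity
        · have hsumpos : 0 < ∑ k, Φh k j ^ 2 :=
            lt_of_lt_of_le (by positivity)
              (Finset.single_le_sum (f := fun k => Φh k j ^ 2)
                (fun k _ => sq_nonneg _) (Finset.mem_univ k0))
          positivity
      have hNsq : (grpNorm bh Φh j) ^ 2 = bh j ^ 2 + ∑ k, Φh k j ^ 2 := by
        rw [grpNorm, Real.sq_sqrt hpos.le]
      rw [hrowcol, hNsq]
      have hne : (bh j ^ 2 + ∑ k, Φh k j ^ 2) ≠ 0 := hpos.ne'
      have hkey : lam2 ^ 2 * s ^ 2 * bh j ^ 2 / (bh j ^ 2 + ∑ k, Φh k j ^ 2)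
            + lam2 ^ 2 * s ^ 2 / 2 * ((∑ k, Φh k j ^ 2) / (bh j ^ 2 + ∑ k, Φh k j ^ 2))
            - lam2 ^ 2 * s ^ 2 / 2 * 1
          = (lam2 ^ 2 * s ^ 2 / 2) * (bh j ^ 2 / (bh j ^ 2 + ∑ k, Φh k j ^ 2)) := by
        field_simp
        ring
      have hge : 0 ≤ (lam2 ^ 2 * s ^ 2 / 2) * (bh j ^ 2 / (bh j ^ 2 + ∑ k, Φh k j ^ 2)) :=
        mul_nonneg (by positivity) (div_nonneg (sq_nonneg _) hpos.le)
      linarith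
    · rw [if_neg hact]
      push_neg at hact
      have hb0 : bh j = 0 := hact.1
      have hrow0 : (∑ k, (Φh j k) ^ 2) = 0 := by
        rw [hrowcol]
        exact Finset.sum_eq_zero fun k _ => by rw [hact.2 k]; ring
      rw [hb0, hrow0]
      simp
  -- fold per-row sums
  have hS1fold : ∀ j : Fin p, (∑ k, Φh j k ^ 2 / grpNorm bh Φh j ^ 2)
      = (∑ k, Φh j k ^ 2) / grpNorm bh Φh j ^ 2 := by
    intro j
    rw [Finset.sum_div]
  have hJG : (JGCount bh Φh : ℝ)
      = ∑ j, (if bh j ≠ 0 ∨ ∃ k, Φh k j ≠ 0 then (1:ℝ) else 0) := by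
    rw [JGCount, ← Finset.sum_filter]
    simp
  -- assemble the lower bound on the total sum
  have hmain : lam1 ^ 2 * s ^ 2 * (JeCount Φh : ℝ)
      + lam2 ^ 2 * s ^ 2 / 2 * (JGCount bh Φh : ℝ)
      ≤ ∑ j, ((if bh j ≠ 0 then (∑ i, X i j * (Mmap X bh Φh i - y i)) ^ 2 else 0)
          + ∑ k, (if Φh j k ≠ 0 then
              (∑ i, (X i j * X i k) * (Mmap X bh Φh i - y i)) ^ 2 else 0)) := by
    refine le_trans ?_ hsum_le
    have hsplit : (∑ j, (lam2 ^ 2 * s ^ 2 * (bh j) ^ 2 / (grpNorm bh Φh j) ^ 2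
          + ∑ k, ((if Φh j k ≠ 0 then lam1 ^ 2 * s ^ 2 else 0)
            + lam2 ^ 2 * s ^ 2 / 4 * ((Φh j k) ^ 2 / (grpNorm bh Φh j) ^ 2
              + (Φh j k) ^ 2 / (grpNorm bh Φh k) ^ 2))))
        = (∑ j, ∑ k, (if Φh j k ≠ 0 then lam1 ^ 2 * s ^ 2 else 0))
          + ((∑ j, lam2 ^ 2 * s ^ 2 * (bh j) ^ 2 / (grpNorm bh Φh j) ^ 2)
            + (lam2 ^ 2 * s ^ 2 / 4 * (∑ j, ∑ k, (Φh j k) ^ 2 / (grpNorm bh Φh j) ^ 2)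
              + lam2 ^ 2 * s ^ 2 / 4 * (∑ j, ∑ k, (Φh j k) ^ 2 / (grpNorm bh Φh k) ^ 2))) := by
      rw [Finset.sum_add_distrib]
      have hinner : ∀ j : Fin p, (∑ k, ((if Φh j k ≠ 0 then lam1 ^ 2 * s ^ 2 else 0)
            + lam2 ^ 2 * s ^ 2 / 4 * ((Φh j k) ^ 2 / (grpNorm bh Φh j) ^ 2
              + (Φh j k) ^ 2 / (grpNorm bh Φh k) ^ 2)))
          = (∑ k, (if Φh j k ≠ 0 then lam1 ^ 2 * s ^ 2 else 0))
            + (lam2 ^ 2 * s ^ 2 / 4 * (∑ k, (Φh j k) ^ 2 / (grpNorm bh Φh j) ^ 2)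
              + lam2 ^ 2 * s ^ 2 / 4 * (∑ k, (Φh j k) ^ 2 / (grpNorm bh Φh k) ^ 2)) := by
        intro j
        rw [Finset.sum_add_distrib]
        congr 1
        rw [Finset.sum_congr rfl (fun k _ =>
            show lam2 ^ 2 * s ^ 2 / 4 * ((Φh j k) ^ 2 / (grpNorm bh Φh j) ^ 2
                + (Φh j k) ^ 2 / (grpNorm bh Φh k) ^ 2)
              = lam2 ^ 2 * s ^ 2 / 4 * ((Φh j k) ^ 2 / (grpNorm bh Φh j) ^ 2)
                + lam2 ^ 2 * s ^ 2 / 4 * ((Φh j k) ^ 2 / (grpNorm bh Φh k) ^ 2) from by ring),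
          Finset.sum_add_distrib, ← Finset.mul_sum, ← Finset.mul_sum]
      rw [Finset.sum_congr rfl fun j _ => hinner j, Finset.sum_add_distrib,
        Finset.sum_add_distrib, ← Finset.mul_sum, ← Finset.mul_sum]
      ring
    rw [hsplit, hJe, hswap]
    have hcombined : lam2 ^ 2 * s ^ 2 / 2 * (JGCount bh Φh : ℝ)
        ≤ (∑ j, lam2 ^ 2 * s ^ 2 * (bh j) ^ 2 / (grpNorm bh Φh j) ^ 2)
          + (lam2 ^ 2 * s ^ 2 / 4 * (∑ j, ∑ k, (Φh j k) ^ 2 / (grpNorm bh Φh j) ^ 2)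
            + lam2 ^ 2 * s ^ 2 / 4 * (∑ j, ∑ k, (Φh j k) ^ 2 / (grpNorm bh Φh j) ^ 2)) := by
      have hhalf : lam2 ^ 2 * s ^ 2 / 4 * (∑ j, ∑ k, (Φh j k) ^ 2 / (grpNorm bh Φh j) ^ 2)
            + lam2 ^ 2 * s ^ 2 / 4 * (∑ j, ∑ k, (Φh j k) ^ 2 / (grpNorm bh Φh j) ^ 2)
          = ∑ j, lam2 ^ 2 * s ^ 2 / 2 * ((∑ k, (Φh j k) ^ 2) / (grpNorm bh Φh j) ^ 2) := by
        rw [show lam2 ^ 2 * s ^ 2 / 4 * (∑ j, ∑ k, (Φh j k) ^ 2 / (grpNorm bh Φh j) ^ 2)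
              + lam2 ^ 2 * s ^ 2 / 4 * (∑ j, ∑ k, (Φh j k) ^ 2 / (grpNorm bh Φh j) ^ 2)
            = lam2 ^ 2 * s ^ 2 / 2 * (∑ j, ∑ k, (Φh j k) ^ 2 / (grpNorm bh Φh j) ^ 2) from
          by ring, Finset.mul_sum]
        exact Finset.sum_congr rfl fun j _ => by rw [hS1fold j]
      rw [hhalf, hJG, Finset.mul_sum, ← Finset.sum_add_distrib]
      exact Finset.sum_le_sum fun j _ => hJG_per j
    linarith
  -- finish: divide by s^2
  have hs2 : 0 < s ^ 2 := by positivity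
  have hJe0 : 0 ≤ lam1 ^ 2 * (JeCount Φh : ℝ) := by positivity
  rw [show (2 : ℝ) / s ^ 2
      * (∑ j, ((if bh j ≠ 0 then (∑ i, X i j * (Mmap X bh Φh i - y i)) ^ 2 else 0)
          + ∑ k, (if Φh j k ≠ 0 then
              (∑ i, (X i j * X i k) * (Mmap X bh Φh i - y i)) ^ 2 else 0)))
      = (2 * (∑ j, ((if bh j ≠ 0 then (∑ i, X i j * (Mmap X bh Φh i - y i)) ^ 2 else 0)
          + ∑ k, (if Φh j k ≠ 0 then
              (∑ i, (X i j * X i k) * (Mmap X bh Φh i - y i)) ^ 2 else 0)))) / s ^ 2 from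
    by ring, le_div_iff₀ hs2]
  nlinarith [hmain]
end
end

section
/- The restricted eigenvalue assumption implies the comparison condition used in the oracle inequality: Suppose Assumption 𝒜(𝒥_e, 𝒥_G, ϑ, κ) holds with κ > 0 and ϑ ≥ 0, and let J_e = |𝒥_e|, J_G = |𝒥_G|. Then for every Δ = [Δ_b, Δ_Φᵀ]ᵀ ∈ ℝ^{(p+1)×p} with Δ_Φ = Δ_Φᵀ, one has ‖X̆‖₂(‖(Δ_Φ)_{𝒥_e}‖₁ + ‖(Δ_{𝒥_G})ᵀ‖_{2,1}) ≤ ‖X̆‖₂(‖(Δ_Φ)_{𝒥_e^c}‖₁ + ‖(Δ_{𝒥_G^c})ᵀ‖_{2,1}) + κ^{−1/2} √(J_e + J_G) ‖X Δ_b + X̄ vec(Δ_Φ)‖₂. -/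
open Matrix MeasureTheory ProbabilityTheory
open scoped Classical

noncomputable section

/-- Assumption 𝒜(𝒥_e, 𝒥_G, ϑ, κ): for every `Δ = [Δ_b, Δ_Φᵀ]ᵀ` with symmetric `Δ_Φ`
lying in the ℓ₁/group-ℓ₁ restricted cone,
`κ‖X̆‖₂²(‖(Δ_Φ)_{𝒥_e}‖₂² + ‖Δ_{𝒥_G}‖_F²) ≤ ‖XΔ_b + X̄vec(Δ_Φ)‖₂²`. -/
def AssumpA {n p : ℕ} (X : Matrix (Fin n) (Fin p) ℝ)
    (Ee : Finset (Fin p × Fin p)) (Eg : Finset (Fin p)) (θ κ : ℝ) : Prop :=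
  ∀ (Δb : Fin p → ℝ) (ΔΦ : Matrix (Fin p) (Fin p) ℝ), ΔΦ = ΔΦᵀ →
    (∑ u ∈ Eeᶜ, |ΔΦ u.1 u.2|) + (∑ j ∈ Egᶜ, grpNorm Δb ΔΦ j)
      ≤ (1 + θ) * ((∑ u ∈ Ee, |ΔΦ u.1 u.2|) + ∑ j ∈ Eg, grpNorm Δb ΔΦ j) →
    κ * specNorm (Xbreve X) ^ 2 *
        ((∑ u ∈ Ee, ΔΦ u.1 u.2 ^ 2) + ∑ j ∈ Eg, (Δb j ^ 2 + ∑ k, ΔΦ k j ^ 2))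
      ≤ ∑ i, Mmap X Δb ΔΦ i ^ 2

/-- **The restricted eigenvalue assumption implies the comparison condition** used
in the oracle inequality: under 𝒜(𝒥_e, 𝒥_G, ϑ, κ) with `κ > 0`, for every `Δ`
with symmetric `Δ_Φ`,
`‖X̆‖₂(‖(Δ_Φ)_{𝒥_e}‖₁ + ‖(Δ_{𝒥_G})ᵀ‖_{2,1}) ≤
 ‖X̆‖₂(‖(Δ_Φ)_{𝒥_e^c}‖₁ + ‖(Δ_{𝒥_G^c})ᵀ‖_{2,1})
   + κ^{−1/2}√(J_e + J_G)‖XΔ_b + X̄vec(Δ_Φ)‖₂`. -/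
theorem re_implies_comparison {n p : ℕ} (hn : 1 ≤ n) (hp : 1 ≤ p)
    (X : Matrix (Fin n) (Fin p) ℝ)
    (Ee : Finset (Fin p × Fin p)) (Eg : Finset (Fin p))
    (θ κ : ℝ) (hθ : 0 ≤ θ) (hκ : 0 < κ)
    (hA : AssumpA X Ee Eg θ κ) :
    ∀ (Δb : Fin p → ℝ) (ΔΦ : Matrix (Fin p) (Fin p) ℝ), ΔΦ = ΔΦᵀ →
      specNorm (Xbreve X) * ((∑ u ∈ Ee, |ΔΦ u.1 u.2|) + ∑ j ∈ Eg, grpNorm Δb ΔΦ j)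
        ≤ specNorm (Xbreve X) *
            ((∑ u ∈ Eeᶜ, |ΔΦ u.1 u.2|) + ∑ j ∈ Egᶜ, grpNorm Δb ΔΦ j)
          + (Real.sqrt κ)⁻¹ * Real.sqrt ((Ee.card : ℝ) + (Eg.card : ℝ)) *
              Real.sqrt (∑ i, Mmap X Δb ΔΦ i ^ 2) := by
  intro Δb ΔΦ hsym
  have hS0 : 0 ≤ specNorm (Xbreve X) := by
    apply Real.sSup_nonneg
    rintro c ⟨v, -, rfl⟩
    exact Real.sqrt_nonneg _
  set S := specNorm (Xbreve X) with hS
  set A1 := ∑ u ∈ Ee, |ΔΦ u.1 u.2| with hA1def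
  set A2 := ∑ j ∈ Eg, grpNorm Δb ΔΦ j with hA2def
  set B := (∑ u ∈ Eeᶜ, |ΔΦ u.1 u.2|) + ∑ j ∈ Egᶜ, grpNorm Δb ΔΦ j with hBdef
  set M := ∑ i, Mmap X Δb ΔΦ i ^ 2 with hMdef
  have hA1n : 0 ≤ A1 := Finset.sum_nonneg fun u _ => abs_nonneg _
  have hA2n : 0 ≤ A2 := Finset.sum_nonneg fun j _ => Real.sqrt_nonneg _
  have hBn : 0 ≤ B := add_nonneg (Finset.sum_nonneg fun u _ => abs_nonneg _)
    (Finset.sum_nonneg fun j _ => Real.sqrt_nonneg _)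
  have hMn : 0 ≤ M := Finset.sum_nonneg fun i _ => sq_nonneg _
  have hterm : 0 ≤ (Real.sqrt κ)⁻¹ * Real.sqrt ((Ee.card : ℝ) + (Eg.card : ℝ)) *
      Real.sqrt M :=
    mul_nonneg (mul_nonneg (inv_nonneg.2 (Real.sqrt_nonneg _)) (Real.sqrt_nonneg _))
      (Real.sqrt_nonneg _)
  by_cases hc : B ≤ (1 + θ) * (A1 + A2)
  · -- restricted cone case: use the assumption
    have hAss := hA Δb ΔΦ hsym hc
    set Q1 := ∑ u ∈ Ee, ΔΦ u.1 u.2 ^ 2 with hQ1def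
    set Q2 := ∑ j ∈ Eg, (Δb j ^ 2 + ∑ k, ΔΦ k j ^ 2) with hQ2def
    have hQ1n : 0 ≤ Q1 := Finset.sum_nonneg fun u _ => sq_nonneg _
    have hQ2n : 0 ≤ Q2 := Finset.sum_nonneg fun j _ =>
      add_nonneg (sq_nonneg _) (Finset.sum_nonneg fun k _ => sq_nonneg _)
    have hcs1 : A1 ^ 2 ≤ (Ee.card : ℝ) * Q1 := by
      have h := Finset.sum_mul_sq_le_sq_mul_sq Ee (fun _ => (1 : ℝ))
        (fun u => |ΔΦ u.1 u.2|)
      have e1 : (∑ u ∈ Ee, (1 : ℝ) * |ΔΦ u.1 u.2|) = A1 := by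
        rw [hA1def]; exact Finset.sum_congr rfl fun u _ => one_mul _
      have e2 : (∑ _u ∈ Ee, (1 : ℝ) ^ 2) = (Ee.card : ℝ) := by
        rw [Finset.sum_const, one_pow, nsmul_eq_mul, mul_one]
      have e3 : (∑ u ∈ Ee, |ΔΦ u.1 u.2| ^ 2) = Q1 := by
        rw [hQ1def]; exact Finset.sum_congr rfl fun u _ => sq_abs _
      rw [e1, e2, e3] at h; exact h
    have hcs2 : A2 ^ 2 ≤ (Eg.card : ℝ) * Q2 := by
      have h := Finset.sum_mul_sq_le_sq_mul_sq Eg (fun _ => (1 : ℝ))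
        (fun j => grpNorm Δb ΔΦ j)
      have e1 : (∑ j ∈ Eg, (1 : ℝ) * grpNorm Δb ΔΦ j) = A2 := by
        rw [hA2def]; exact Finset.sum_congr rfl fun j _ => one_mul _
      have e2 : (∑ _j ∈ Eg, (1 : ℝ) ^ 2) = (Eg.card : ℝ) := by
        rw [Finset.sum_const, one_pow, nsmul_eq_mul, mul_one]
      have e3 : (∑ j ∈ Eg, grpNorm Δb ΔΦ j ^ 2) = Q2 := by
        rw [hQ2def]
        exact Finset.sum_congr rfl fun j _ => Real.sq_sqrt
          (add_nonneg (sq_nonneg _) (Finset.sum_nonneg fun k _ => sq_nonneg _))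
      rw [e1, e2, e3] at h; exact h
    have hcomb : (A1 + A2) ^ 2 ≤ ((Ee.card : ℝ) + (Eg.card : ℝ)) * (Q1 + Q2) := by
      nlinarith [sq_nonneg (A1 - A2), sq_nonneg (A1 + A2), mul_nonneg hA1n hA2n,
        sq_nonneg ((Ee.card : ℝ) * Q2 - (Eg.card : ℝ) * Q1),
        mul_nonneg (mul_nonneg hA1n hA2n) (mul_nonneg hQ1n hQ2n),
        mul_nonneg (Nat.cast_nonneg Ee.card) hQ2n,
        mul_nonneg (Nat.cast_nonneg Eg.card) hQ1n]
    have hSQ : (S * (A1 + A2)) ^ 2 ≤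
        ((Real.sqrt κ)⁻¹ * Real.sqrt ((Ee.card : ℝ) + (Eg.card : ℝ)) * Real.sqrt M) ^ 2 := by
      have hrhs : ((Real.sqrt κ)⁻¹ * Real.sqrt ((Ee.card : ℝ) + (Eg.card : ℝ)) *
          Real.sqrt M) ^ 2 = κ⁻¹ * (((Ee.card : ℝ) + (Eg.card : ℝ)) * M) := by
        rw [mul_pow, mul_pow, ← Real.sqrt_inv, Real.sq_sqrt (by positivity),
          Real.sq_sqrt (add_nonneg (Nat.cast_nonneg _) (Nat.cast_nonneg _)), Real.sq_sqrt hMn]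
        ring
      rw [hrhs]
      have hSqq : κ * (S ^ 2 * (Q1 + Q2)) ≤ M := by
        calc κ * (S ^ 2 * (Q1 + Q2)) = κ * S ^ 2 * (Q1 + Q2) := by ring
        _ ≤ M := hAss
      have hS2 : 0 ≤ S ^ 2 * (Q1 + Q2) := by positivity
      calc (S * (A1 + A2)) ^ 2 = S ^ 2 * (A1 + A2) ^ 2 := by ring
        _ ≤ S ^ 2 * (((Ee.card : ℝ) + (Eg.card : ℝ)) * (Q1 + Q2)) :=
            mul_le_mul_of_nonneg_left hcomb (sq_nonneg _)
        _ = ((Ee.card : ℝ) + (Eg.card : ℝ)) * (S ^ 2 * (Q1 + Q2)) := by ring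
        _ ≤ ((Ee.card : ℝ) + (Eg.card : ℝ)) * (κ⁻¹ * M) := by
            apply mul_le_mul_of_nonneg_left _ (add_nonneg (Nat.cast_nonneg _) (Nat.cast_nonneg _))
            have hdiv : S ^ 2 * (Q1 + Q2) ≤ M / κ :=
              (le_div_iff₀ hκ).2 (by linarith [hSqq])
            rw [div_eq_inv_mul] at hdiv
            exact hdiv
        _ = κ⁻¹ * (((Ee.card : ℝ) + (Eg.card : ℝ)) * M) := by ring
    have hmain : S * (A1 + A2) ≤
        (Real.sqrt κ)⁻¹ * Real.sqrt ((Ee.card : ℝ) + (Eg.card : ℝ)) * Real.sqrt M := by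
      have h1 : 0 ≤ S * (A1 + A2) := mul_nonneg hS0 (add_nonneg hA1n hA2n)
      have h2 := Real.sqrt_le_sqrt hSQ
      rwa [Real.sqrt_sq h1, Real.sqrt_sq hterm] at h2
    calc S * (A1 + A2) ≤ (Real.sqrt κ)⁻¹ * Real.sqrt ((Ee.card : ℝ) + (Eg.card : ℝ)) *
          Real.sqrt M := hmain
      _ ≤ S * B + (Real.sqrt κ)⁻¹ * Real.sqrt ((Ee.card : ℝ) + (Eg.card : ℝ)) *
          Real.sqrt M := le_add_of_nonneg_left (mul_nonneg hS0 hBn)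
  · -- outside the cone: A1 + A2 ≤ B directly
    push_neg at hc
    have hAB : A1 + A2 ≤ B := by nlinarith [hc]
    exact le_trans (mul_le_mul_of_nonneg_left hAB hS0) (le_add_of_nonneg_right hterm)
end
end
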